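/- For all x ≥ 0, α ∈ (0, 1/2], r ≥ 0, and λ ∈ [0, r/log(1/α)] with λ ∈ (0, 1/2], we have 1 + x/(1 + αx) ≤ e^(2r) · (1 + x)^(1−λ). -/
import Mathlib


theorem stmt7 (x α r lam : ℝ) (hx : 0 ≤ x) (hα : α ∈ Set.Ioc (0:ℝ) (1/2))
    (hr : 0 ≤ r) (hlam₁ : lam ∈ Set.Icc (0:ℝ) (r / Real.log (1/α)))
    (hlam₂ : lam ∈ Set.Ioc (0:ℝ) (1/2)) :
    1 + x / (1 + α * x) ≤ Real.exp (2 * r) * (1 + x) ^ (1 - lam) := by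
  obtain ⟨hα0, hα2⟩ := hα
  obtain ⟨hlam0, hlamr⟩ := hlam₁
  obtain ⟨hlam0', hlam_half⟩ := hlam₂
  set b := 1/α with hb
  have hb2 : (2:ℝ) ≤ b := by
    rw [hb, le_div_iff₀ hα0]; linarith
  have hbpos : (0:ℝ) < b := by linarith
  have hb1 : (1:ℝ) < b := by linarith
  have hlogb : 0 < Real.log b := Real.log_pos hb1
  have hr2 : lam * Real.log b ≤ r := by
    rw [← le_div_iff₀ hlogb]; exact hlamr
  have hexp : b ^ (2*lam) ≤ Real.exp (2*r) := by
    rw [Real.rpow_def_of_pos hbpos]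
    apply Real.exp_le_exp.mpr
    nlinarith
  have hx1 : (0:ℝ) < 1 + x := by linarith
  have hax : 0 < 1 + α * x := by nlinarith
  have hLHS1 : 1 + x/(1+α*x) ≤ 1 + x := by
    have : x/(1+α*x) ≤ x := div_le_self hx (by nlinarith)
    linarith
  have hLHS2 : 1 + x/(1+α*x) ≤ 1 + b := by
    have : x/(1+α*x) ≤ b := by
      rw [hb, div_le_div_iff₀ hax hα0]; nlinarith
    linarith
  have hrpnn : (0:ℝ) ≤ (1+x) ^ (1-lam) := Real.rpow_nonneg hx1.le _
  rcases le_or_gt (1+x) (b^(2:ℝ)) with hcase | hcase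
  · have h1 : (1+x)^lam ≤ b^(2*lam) := by
      calc (1+x)^lam ≤ (b^(2:ℝ))^lam := Real.rpow_le_rpow hx1.le hcase hlam0
        _ = b^(2*lam) := (Real.rpow_mul hbpos.le 2 lam).symm
    have hsplit : 1+x = (1+x)^lam * (1+x)^(1-lam) := by
      rw [← Real.rpow_add hx1]; norm_num
    calc 1 + x/(1+α*x) ≤ 1+x := hLHS1
      _ = (1+x)^lam * (1+x)^(1-lam) := hsplit
      _ ≤ Real.exp (2*r) * (1+x)^(1-lam) :=
        mul_le_mul_of_nonneg_right (h1.trans hexp) hrpnn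
  · have hbsq : 1 + b ≤ b^(2:ℝ) := by
      rw [show ((2:ℝ)) = ((2:ℕ):ℝ) from by norm_num, Real.rpow_natCast]
      nlinarith
    have key : b^(2:ℝ) = b^(2*lam) * (b^(2:ℝ))^(1-lam) := by
      rw [← Real.rpow_mul hbpos.le, ← Real.rpow_add hbpos]; ring_nf
    have h3 : (b^(2:ℝ))^(1-lam) ≤ (1+x)^(1-lam) :=
      Real.rpow_le_rpow (Real.rpow_nonneg hbpos.le _) hcase.le (by linarith)
    calc 1 + x/(1+α*x) ≤ 1 + b := hLHS2
      _ ≤ b^(2:ℝ) := hbsq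
      _ = b^(2*lam) * (b^(2:ℝ))^(1-lam) := key
      _ ≤ Real.exp (2*r) * (1+x)^(1-lam) :=
        mul_le_mul hexp h3 (Real.rpow_nonneg (Real.rpow_nonneg hbpos.le _) _)
          (Real.exp_nonneg _)
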